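/- Let F_q be a finite field and A, B ⊆ F_q with |A|·|B| > q. Then the average over ξ ∈ F_q* of the number of solutions (a₁,b₁,a₂,b₂) ∈ A×B×A×B to a₁ + ξb₁ = a₂ + ξb₂ is less than (2/q)|A|²|B|². Equivalently, Σ_{ξ∈F_q*} N(ξ) < 2(q−1)|A|²|B|²/q, where N(ξ) counts such quadruples. -/

import Mathlib

set_option maxHeartbeats 1000000 in
theorem stmt_17 {F : Type*} [Field F] [Fintype F] [DecidableEq F] (q : ℕ)
    (hq : Fintype.card F = q) (A B : Finset F) (h : q < A.card * B.card) :
    ∑ ξ ∈ Finset.univ.filter (fun x : F => x ≠ 0),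
        (((((A ×ˢ B) ×ˢ (A ×ˢ B)).filter
          (fun p => p.1.1 + ξ * p.1.2 = p.2.1 + ξ * p.2.2)).card : ℚ)) <
      2 * ((q : ℚ) - 1) * (A.card : ℚ) ^ 2 * (B.card : ℚ) ^ 2 / q := by
  classical
  set P := (A ×ˢ B) ×ˢ (A ×ˢ B) with hP
  set T := Finset.univ.filter (fun x : F => x ≠ 0) with hT
  set g : F → Finset ((F × F) × F × F) := fun ξ =>
    P.filter (fun p => p.1.2 ≠ p.2.2 ∧ p.1.1 + ξ * p.1.2 = p.2.1 + ξ * p.2.2) with hg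
  set S : Finset ((F × F) × F × F) :=
    P.filter (fun p => p.1.1 ≠ p.2.1 ∧ p.1.2 ≠ p.2.2) with hS
  have hq2 : 2 ≤ q := by
    rw [← hq]; exact Fintype.one_lt_card
  -- step 1: per-ξ bound
  have step1 : ∀ ξ ∈ T, (P.filter
      (fun p => p.1.1 + ξ * p.1.2 = p.2.1 + ξ * p.2.2)).card
      ≤ (A ×ˢ B).card + (g ξ).card := by
    intro ξ hξ
    have hsub : P.filter (fun p => p.1.1 + ξ * p.1.2 = p.2.1 + ξ * p.2.2)
        ⊆ (A ×ˢ B).diag ∪ g ξ := by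
      intro p hp
      simp only [Finset.mem_filter, hP] at hp
      obtain ⟨hpP, heq⟩ := hp
      by_cases hb : p.1.2 = p.2.2
      · have ha : p.1.1 = p.2.1 := by
          rw [hb] at heq; exact add_right_cancel heq
        refine Finset.mem_union_left _ ?_
        rw [Finset.mem_diag]
        have hm := Finset.mem_product.mp hpP
        exact ⟨hm.1, Prod.ext ha hb⟩
      · exact Finset.mem_union_right _ (by
          simp only [hg, Finset.mem_filter]
          exact ⟨hpP, hb, heq⟩)
    calc _ ≤ ((A ×ˢ B).diag ∪ g ξ).card := Finset.card_le_card hsub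
      _ ≤ (A ×ˢ B).diag.card + (g ξ).card := Finset.card_union_le _ _
      _ = (A ×ˢ B).card + (g ξ).card := by rw [Finset.diag_card]
  -- step 2: the g ξ are pairwise disjoint and contained in S
  have hdisj : ∀ ξ ∈ T, ∀ ξ' ∈ T, ξ ≠ ξ' → Disjoint (g ξ) (g ξ') := by
    intro ξ _ ξ' _ hne
    rw [Finset.disjoint_left]
    intro p hp hp'
    simp only [hg, Finset.mem_filter] at hp hp'
    obtain ⟨_, hb, he⟩ := hp
    obtain ⟨_, _, he'⟩ := hp'
    apply hne
    have h1 : ξ * (p.1.2 - p.2.2) = p.2.1 - p.1.1 := by ring_nf; linear_combination he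
    have h2 : ξ' * (p.1.2 - p.2.2) = p.2.1 - p.1.1 := by ring_nf; linear_combination he'
    have hb' : p.1.2 - p.2.2 ≠ 0 := sub_ne_zero.mpr hb
    field_simp at h1 h2
    exact mul_right_cancel₀ hb' (by linear_combination h1 - h2)
  have hsubS : ∀ ξ ∈ T, g ξ ⊆ S := by
    intro ξ hξ p hp
    simp only [hg, Finset.mem_filter] at hp
    obtain ⟨hpP, hb, he⟩ := hp
    simp only [hT, Finset.mem_filter, Finset.mem_univ, true_and] at hξ
    simp only [hS, Finset.mem_filter]
    refine ⟨hpP, ?_, hb⟩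
    intro ha
    apply hb
    rw [ha] at he
    have : ξ * p.1.2 = ξ * p.2.2 := by linear_combination he
    exact mul_left_cancel₀ hξ this
  have step2 : ∑ ξ ∈ T, (g ξ).card ≤ S.card := by
    rw [← Finset.card_biUnion hdisj]
    apply Finset.card_le_card
    intro p hp
    rw [Finset.mem_biUnion] at hp
    obtain ⟨ξ, hξ, hp⟩ := hp
    exact hsubS ξ hξ hp
  -- step 3: S.card ≤ offDiag counts
  have step3 : S.card ≤ A.offDiag.card * B.offDiag.card := by
    rw [← Finset.card_product]
    apply Finset.card_le_card_of_injOn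
      (fun p => ((p.1.1, p.2.1), (p.1.2, p.2.2)))
    · intro p hp
      simp only [Finset.mem_coe, hS, hP, Finset.mem_filter, Finset.mem_product, Finset.mem_offDiag] at hp ⊢
      obtain ⟨⟨⟨ha1, hb1⟩, ha2, hb2⟩, hna, hnb⟩ := hp
      exact ⟨⟨ha1, ha2, hna⟩, hb1, hb2, hnb⟩
    · intro p _ p' _ hpe
      simp only [Prod.mk.injEq] at hpe
      obtain ⟨⟨e1, e2⟩, e3, e4⟩ := hpe
      exact Prod.ext (Prod.ext e1 e3) (Prod.ext e2 e4)
  -- step 4: card of T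
  have hTcard : T.card = q - 1 := by
    rw [hT, Finset.filter_ne' Finset.univ 0, Finset.card_erase_of_mem (Finset.mem_univ 0),
      Finset.card_univ, hq]
  -- combine in ℕ
  have hnat : ∑ ξ ∈ T, (P.filter
      (fun p => p.1.1 + ξ * p.1.2 = p.2.1 + ξ * p.2.2)).card
      ≤ (q - 1) * ((A ×ˢ B).card) + A.offDiag.card * B.offDiag.card := by
    calc _ ≤ ∑ ξ ∈ T, ((A ×ˢ B).card + (g ξ).card) := Finset.sum_le_sum step1
      _ = T.card * (A ×ˢ B).card + ∑ ξ ∈ T, (g ξ).card := by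
          rw [Finset.sum_add_distrib, Finset.sum_const, smul_eq_mul]
      _ ≤ (q - 1) * ((A ×ˢ B).card) + A.offDiag.card * B.offDiag.card := by
          rw [hTcard]; exact Nat.add_le_add le_rfl (le_trans step2 step3)
  -- cast to ℚ and finish
  have hcast : (∑ ξ ∈ T, (((P.filter
      (fun p => p.1.1 + ξ * p.1.2 = p.2.1 + ξ * p.2.2)).card : ℚ)))
      = ((∑ ξ ∈ T, (P.filter
      (fun p => p.1.1 + ξ * p.1.2 = p.2.1 + ξ * p.2.2)).card : ℕ) : ℚ) := by
    push_cast; ring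
  rw [hcast]
  have hAB : 0 < A.card * B.card := lt_of_le_of_lt (Nat.zero_le q) h
  have hA1 : 1 ≤ A.card := Nat.pos_of_ne_zero (by
    rintro h0; rw [h0, zero_mul] at hAB; exact lt_irrefl 0 hAB)
  have hB1 : 1 ≤ B.card := Nat.pos_of_ne_zero (by
    rintro h0; rw [h0, mul_zero] at hAB; exact lt_irrefl 0 hAB)
  have hq1 : 1 ≤ q := le_trans (by norm_num) hq2
  have hAA : A.card ≤ A.card * A.card := Nat.le_mul_of_pos_left _ hA1
  have hBB : B.card ≤ B.card * B.card := Nat.le_mul_of_pos_left _ hB1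
  have hqQ : (2 : ℚ) ≤ (q : ℚ) := by exact_mod_cast hq2
  have habQ : (q : ℚ) + 1 ≤ (A.card : ℚ) * (B.card : ℚ) := by
    have : q + 1 ≤ A.card * B.card := h
    exact_mod_cast this
  have haQ : (1 : ℚ) ≤ (A.card : ℚ) := by exact_mod_cast hA1
  have hbQ : (1 : ℚ) ≤ (B.card : ℚ) := by exact_mod_cast hB1
  have hsum3 : (3 : ℚ) ≤ (A.card : ℚ) + (B.card : ℚ) := by
    nlinarith [sq_nonneg ((A.card : ℚ) - (B.card : ℚ)),
      sq_nonneg ((A.card : ℚ) + (B.card : ℚ) - 3)]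
  calc ((∑ ξ ∈ T, (P.filter
        (fun p => p.1.1 + ξ * p.1.2 = p.2.1 + ξ * p.2.2)).card : ℕ) : ℚ)
      ≤ (((q - 1) * ((A ×ˢ B).card) + A.offDiag.card * B.offDiag.card : ℕ) : ℚ) := by
        exact_mod_cast hnat
    _ = ((q : ℚ) - 1) * ((A.card : ℚ) * (B.card : ℚ))
        + ((A.card : ℚ) * (A.card : ℚ) - (A.card : ℚ))
        * ((B.card : ℚ) * (B.card : ℚ) - (B.card : ℚ)) := by
        rw [Finset.offDiag_card, Finset.offDiag_card, Finset.card_product]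
        push_cast [Nat.cast_sub hq1, Nat.cast_sub hAA, Nat.cast_sub hBB]
        ring
    _ < 2 * ((q : ℚ) - 1) * (A.card : ℚ) ^ 2 * (B.card : ℚ) ^ 2 / q := by
        rw [lt_div_iff₀ (by positivity : (0 : ℚ) < (q : ℚ))]
        have h1 : (0:ℚ) ≤ ((q:ℚ) - 2) * ((A.card : ℚ) * (B.card : ℚ) - (q:ℚ) - 1)
            * ((A.card : ℚ) * (B.card : ℚ)) :=
          mul_nonneg (mul_nonneg (by linarith)
            (by linarith)) (by nlinarith)
        have h2 : (0:ℚ) < ((q:ℚ) * ((A.card : ℚ) + (B.card : ℚ)) - (q:ℚ) - 2)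
            * ((A.card : ℚ) * (B.card : ℚ)) :=
          mul_pos (by nlinarith) (by nlinarith)
        linarith [h1, h2]
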